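/- Let R be a UFD, and f, g ∈ R[x] with deg f = d₁ > d₂ = deg g ≥ 1. Write the pseudo-division identity l^(δ+1)·f + q·g = r where l = leadingCoeff(g), δ = d₁ - d₂. Write q = l·t·x + s where s ∈ R is the constant-coefficient contribution as in the pseudo-division construction (i.e., s is the coefficient of x⁰ in q). If gcd(l, s) = 1, then the content of g is a unit (g is primitive). -/

import Mathlib

/-- If in the pseudo-division `l^(δ+1)·f + q·g = r` (with `deg f = d₁ > d₂ = deg g ≥ 1`)
the quotient has the form `q = l·t·x + s` with `s = q.coeff 0 ∈ R`, and `gcd(l, s) = 1`,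
then `g` is primitive. -/
theorem primitive_of_coprime_leadingCoeff_const {R : Type*} [CommRing R] [IsDomain R]
    [UniqueFactorizationMonoid R]
    (f g q r : Polynomial R)
    (hdeg2 : 1 ≤ g.natDegree) (hdeg : g.natDegree < f.natDegree)
    (heq : Polynomial.C g.leadingCoeff ^ (f.natDegree - g.natDegree + 1) * f + q * g = r)
    (hr : r.degree < g.degree)
    (hq : ∃ t : Polynomial R,
      q = Polynomial.C g.leadingCoeff * t * Polynomial.X + Polynomial.C (q.coeff 0))
    (hcop : IsRelPrime g.leadingCoeff (q.coeff 0)) :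
    g.IsPrimitive := by
  classical
  obtain ⟨t, ht⟩ := hq
  set n := g.natDegree with hn
  set l := g.leadingCoeff with hl
  set s := q.coeff 0 with hs
  set δ := f.natDegree - n with hδ
  have hg0 : g ≠ 0 := Polynomial.ne_zero_of_natDegree_gt hdeg2
  have hl0 : l ≠ 0 := Polynomial.leadingCoeff_ne_zero.mpr hg0
  have hδ1 : 1 ≤ δ := by omega
  -- coefficient of degree n of r is zero
  have hrc : r.coeff n = 0 := by
    apply Polynomial.coeff_eq_zero_of_degree_lt
    calc r.degree < g.degree := hr
    _ ≤ (n : WithBot ℕ) := Polynomial.degree_le_natDegree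
  -- take coefficient n in heq
  have hco := congrArg (fun p => Polynomial.coeff p n) heq
  simp only [Polynomial.coeff_add] at hco
  rw [hrc, ht] at hco
  have h1 : (Polynomial.C l ^ (δ + 1) * f).coeff n = l ^ (δ + 1) * f.coeff n := by
    rw [← map_pow, Polynomial.coeff_C_mul]
  have h2 : ((Polynomial.C l * t * Polynomial.X + Polynomial.C s) * g).coeff n
      = l * (t * Polynomial.X * g).coeff n + s * l := by
    rw [add_mul, Polynomial.coeff_add, mul_assoc, mul_assoc, Polynomial.coeff_C_mul,
      Polynomial.coeff_C_mul, ← mul_assoc, Polynomial.coeff_natDegree, ← hl]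
  rw [h1, h2] at hco
  -- cancel l
  have hkey : s = -(l ^ δ * f.coeff n) - (t * Polynomial.X * g).coeff n := by
    have : l * (l ^ δ * f.coeff n + (t * Polynomial.X * g).coeff n + s) = 0 := by
      ring_nf
      ring_nf at hco
      linear_combination hco
    rcases mul_eq_zero.mp this with h | h
    · exact absurd h hl0
    · linear_combination h
  intro c hc
  have hcl : c ∣ l := by
    obtain ⟨g₁, hg₁⟩ := hc
    rw [hl, hg₁, Polynomial.leadingCoeff_mul, Polynomial.leadingCoeff_C]
    exact Dvd.intro _ rfl
  have hcs : c ∣ s := by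
    rw [hkey]
    apply dvd_sub
    · exact dvd_neg.mpr ((dvd_pow hcl (by omega)).mul_right _)
    · obtain ⟨g₁, hg₁⟩ := hc
      rw [hg₁, show t * Polynomial.X * (Polynomial.C c * g₁)
        = Polynomial.C c * (t * Polynomial.X * g₁) by ring, Polynomial.coeff_C_mul]
      exact Dvd.intro _ rfl
  exact hcop hcl hcs
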